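/- Let α_1, …, α_r and β_1, …, β_{r+x} be non-decreasing chains of divisibility of monic polynomials (α_1 ∣ ⋯ ∣ α_r and β_1 ∣ ⋯ ∣ β_{r+x}) over a field, with the convention α_i = 1 for i ≤ 0. Then Σ_{i=1}^{r+x} deg(lcm(α_{i−x}, β_i)) − Σ_{i=1}^{r+x} deg(β_i) ≥ max{ Σ_{i=1}^{r} deg(α_i) − Σ_{i=1}^{r+x} deg(β_i), 0 }. -/
import Mathlib


open scoped Classical

/-- For divisibility chains of monic polynomials `α₁ ∣ ⋯ ∣ α_r` and
`β₁ ∣ ⋯ ∣ β_{r+x}` (with `α_i = 1` for `i < 1`),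
`Σ deg(lcm(α_{i-x}, β_i)) − Σ deg(β_i) ≥ max(Σ deg(α_i) − Σ deg(β_i), 0)`. -/
theorem stmt4 (F : Type*) [Field F] (r x : ℕ) (α β : ℤ → Polynomial F)
    (hα1 : ∀ i : ℤ, i < 1 → α i = 1)
    (hαm : ∀ i : ℤ, 1 ≤ i → i ≤ (r : ℤ) → (α i).Monic)
    (hαchain : ∀ i : ℤ, 1 ≤ i → i < (r : ℤ) → α i ∣ α (i + 1))
    (hβm : ∀ i : ℤ, 1 ≤ i → i ≤ (r : ℤ) + x → (β i).Monic)
    (hβchain : ∀ i : ℤ, 1 ≤ i → i < (r : ℤ) + x → β i ∣ β (i + 1)) :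
    max (∑ i ∈ Finset.Icc (1 : ℤ) (r : ℤ), ((α i).natDegree : ℤ)
          - ∑ i ∈ Finset.Icc (1 : ℤ) ((r : ℤ) + x), ((β i).natDegree : ℤ)) 0
      ≤ ∑ i ∈ Finset.Icc (1 : ℤ) ((r : ℤ) + x), ((EuclideanDomain.lcm (α (i - x)) (β i)).natDegree : ℤ)
        - ∑ i ∈ Finset.Icc (1 : ℤ) ((r : ℤ) + x), ((β i).natDegree : ℤ) := by
  have hαne : ∀ i : ℤ, i ≤ (r : ℤ) → α i ≠ 0 := by
    intro i hi
    rcases lt_or_ge i 1 with h | h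
    · rw [hα1 i h]; exact one_ne_zero
    · exact (hαm i h hi).ne_zero
  have hlcm : ∀ i : ℤ, 1 ≤ i → i ≤ (r : ℤ) + x →
      EuclideanDomain.lcm (α (i - x)) (β i) ≠ 0 := by
    intro i h1 h2
    rw [Ne, EuclideanDomain.lcm_eq_zero_iff]
    push_neg
    exact ⟨hαne _ (by omega), (hβm i h1 h2).ne_zero⟩
  -- L ≥ B
  have hB : ∑ i ∈ Finset.Icc (1 : ℤ) ((r : ℤ) + x), ((β i).natDegree : ℤ)
      ≤ ∑ i ∈ Finset.Icc (1 : ℤ) ((r : ℤ) + x),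
        ((EuclideanDomain.lcm (α (i - x)) (β i)).natDegree : ℤ) := by
    apply Finset.sum_le_sum
    intro i hi
    simp only [Finset.mem_Icc] at hi
    exact_mod_cast Polynomial.natDegree_le_of_dvd (EuclideanDomain.dvd_lcm_right _ _)
      (hlcm i hi.1 hi.2)
  -- L ≥ A
  have hS : ∑ i ∈ Finset.Icc (1 : ℤ) (r : ℤ), ((α i).natDegree : ℤ)
      ≤ ∑ i ∈ Finset.Icc (1 : ℤ) ((r : ℤ) + x), ((α (i - x)).natDegree : ℤ) := by
    have hmap : ∑ i ∈ Finset.Icc (1 : ℤ) ((r : ℤ) + x), ((α (i - x)).natDegree : ℤ)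
        = ∑ j ∈ Finset.Icc (1 - (x : ℤ)) (r : ℤ), ((α j).natDegree : ℤ) := by
      apply Finset.sum_nbij' (fun i => i - (x : ℤ)) (fun j => j + (x : ℤ)) <;>
        intro a ha <;> simp only [Finset.mem_Icc] at * <;> omega
    rw [hmap]
    apply Finset.sum_le_sum_of_subset_of_nonneg
    · intro a ha; simp only [Finset.mem_Icc] at *; omega
    · intro i _ _; positivity
  have hA : ∑ i ∈ Finset.Icc (1 : ℤ) (r : ℤ), ((α i).natDegree : ℤ)
      ≤ ∑ i ∈ Finset.Icc (1 : ℤ) ((r : ℤ) + x),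
        ((EuclideanDomain.lcm (α (i - x)) (β i)).natDegree : ℤ) := by
    refine hS.trans (Finset.sum_le_sum ?_)
    intro i hi
    simp only [Finset.mem_Icc] at hi
    exact_mod_cast Polynomial.natDegree_le_of_dvd (EuclideanDomain.dvd_lcm_left _ _)
      (hlcm i hi.1 hi.2)
  rw [max_le_iff]
  constructor <;> omega
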